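/- With notation as in the Paley-Wiener comparison lemma, for each r > 0, ε > 0, and N ∈ ℕ there is a constant c > 0 (depending only on N, r, ε, D) such that for every family f ∈ PW̲^r one has the seminorm estimate N^{r+ε}_N(f) ≤ c · N̲_{4N+4D}(f), where N^{r+ε}_N(f) = sup_{e,λ∈V_{e,ℂ}*}(1+d(e)+|λ|)^N e^{-(r+ε)|Re λ|}|f_e(λ)| and N̲_M(f) = sup_{e, λ∈iV_e*}(1+d(e)+|λ|)^M |f_e(λ)|. -/

import Mathlib

open scoped BigOperators

/-- The hermitian norm of the real part of `λ ∈ ℂⁿ`. -/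
noncomputable def reNorm {n : ℕ} (ν : EuclideanSpace ℂ (Fin n)) : ℝ :=
  Real.sqrt (∑ j, (ν j).re ^ 2)

open Filter

lemma poly_mul_exp_tendsto (C₁ K eps : ℝ) (heps : 0 < eps) (M : ℕ) :
    Tendsto (fun t : ℝ => C₁ * (K + t) ^ M * Real.exp (-(eps * t))) atTop (nhds 0) := by
  have h2 : Tendsto (fun t : ℝ => eps * (K + t)) atTop atTop :=
    (tendsto_atTop_add_const_left _ K tendsto_id).const_mul_atTop heps
  have h3 := (Real.tendsto_pow_mul_exp_neg_atTop_nhds_zero M).comp h2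
  have h4 := h3.const_mul (C₁ * (eps ^ M)⁻¹ * Real.exp (eps * K))
  rw [mul_zero] at h4
  convert h4 using 2 with t
  simp only [Function.comp_apply]
  rw [mul_pow, show -(eps * (K + t)) = -(eps*K) + -(eps*t) by ring, Real.exp_add,
    Real.exp_neg]
  simp only [Real.exp_neg]
  have he := (Real.exp_pos (eps*K)).ne'
  have hp := pow_ne_zero M heps.ne'
  field_simp

lemma pl_helper {h : ℂ → ℂ} (hdiff : Differentiable ℂ h) {C C₁ K eps : ℝ}
    (hC₁ : 0 ≤ C₁) (hK : 0 ≤ K) (heps : 0 < eps) (M : ℕ)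
    (hgrow : ∀ w : ℂ, 0 ≤ w.re →
      ‖h w‖ ≤ C₁ * (K + ‖w‖) ^ M * Real.exp (-(eps * w.re)))
    (him : ∀ t : ℝ, ‖h (t * Complex.I)‖ ≤ C) :
    ∀ w : ℂ, 0 ≤ w.re → ‖h w‖ ≤ C := by
  intro w hw
  have key := PhragmenLindelof.right_half_plane_of_tendsto_zero_on_real
    (f := h) (z := w) (C := C) hdiff.diffContOnCl ?_ ?_ ?_ hw
  · simpa using key
  · -- growth
    refine ⟨1, one_lt_two, 1, ?_⟩
    rw [Asymptotics.isBigO_iff]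
    refine ⟨1, ?_⟩
    have hev : ∀ᶠ t : ℝ in atTop, C₁ * (K + t) ^ M * Real.exp (-(1 * t)) ≤ 1 :=
      (poly_mul_exp_tendsto C₁ K 1 one_pos M).eventually (eventually_le_nhds zero_lt_one)
    have h5 : ∀ᶠ z : ℂ in Bornology.cobounded ℂ,
        C₁ * (K + ‖z‖) ^ M * Real.exp (-(1 * ‖z‖)) ≤ 1 :=
      tendsto_norm_cobounded_atTop.eventually hev
    rw [Filter.eventually_inf_principal]
    filter_upwards [h5] with z hz hzre
    have h6 := hgrow z (le_of_lt hzre)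
    have h7 : C₁ * (K + ‖z‖) ^ M ≤ Real.exp ‖z‖ := by
      have := mul_le_mul_of_nonneg_right hz (Real.exp_pos ‖z‖).le
      rw [one_mul, mul_assoc, ← Real.exp_add] at this
      norm_num at this
      linarith
    have h8 : Real.exp (-(eps * z.re)) ≤ 1 := by
      rw [Real.exp_le_one_iff]
      nlinarith [le_of_lt hzre]
    have h9 : ‖h z‖ ≤ C₁ * (K + ‖z‖) ^ M := by
      calc ‖h z‖ ≤ C₁ * (K + ‖z‖) ^ M * Real.exp (-(eps * z.re)) := h6
        _ ≤ C₁ * (K + ‖z‖) ^ M * 1 := by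
            apply mul_le_mul_of_nonneg_left h8; positivity
        _ = C₁ * (K + ‖z‖) ^ M := by rw [mul_one]
    have hid : ‖Real.exp (1 * ‖z‖ ^ (1:ℝ))‖ = Real.exp ‖z‖ := by
      rw [Real.norm_eq_abs, Real.abs_exp, one_mul, Real.rpow_one]
    rw [hid, one_mul]
    exact le_trans h9 h7
  · -- tendsto zero on real
    rw [tendsto_zero_iff_norm_tendsto_zero]
    apply squeeze_zero' (Filter.Eventually.of_forall fun x => norm_nonneg _)
      ?_ (poly_mul_exp_tendsto C₁ K eps heps M)
    filter_upwards [Filter.eventually_ge_atTop (0:ℝ)] with x hx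
    have := hgrow x (by simpa using hx)
    simpa [Complex.norm_real, _root_.abs_of_nonneg hx] using this
  · intro t
    simpa using him t

set_option maxHeartbeats 1000000 in
/-- Seminorm estimate for the inclusion `PW̲^r ⊆ PW^{r+ε}`: there is a constant
`c > 0` depending only on `N`, `r`, `ε` and `D` such that, for every family `f ∈ PW̲^r`
(entire, with per-element exponential type `r` bounds), if `B` bounds the seminorm
`N̲_{4N+4D}(f) = sup (1+d(e)+|λ|)^{4N+4D} |f_e(λ)|` over imaginary `λ`, then
`(1+d(e)+|λ|)^N e^{-(r+ε)|Re λ|} |f_e(λ)| ≤ c B` everywhere, i.e.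
`N^{r+ε}_N(f) ≤ c · N̲_{4N+4D}(f)`. -/
theorem paleyWiener_seminorm_estimate
    (E : Type*) (D : ℕ) (d : E → ℝ) (hd : ∀ e, 0 ≤ d e)
    (dim : E → ℕ) (hdim : ∀ e, dim e ≤ D)
    (r ε : ℝ) (hr : 0 < r) (hε : 0 < ε) (N : ℕ) :
    ∃ c : ℝ, 0 < c ∧
      ∀ f : ∀ e : E, EuclideanSpace ℂ (Fin (dim e)) → ℂ,
        (∀ e, Differentiable ℂ (f e)) →
        (∀ (e : E) (N' : ℕ), ∃ C : ℝ, ∀ ν : EuclideanSpace ℂ (Fin (dim e)),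
            (1 + ‖ν‖) ^ N' * ‖f e ν‖ ≤ C * Real.exp (r * reNorm ν)) →
        ∀ B : ℝ,
          (∀ (e : E) (ν : EuclideanSpace ℂ (Fin (dim e))), (∀ j, (ν j).re = 0) →
              (1 + d e + ‖ν‖) ^ (4 * N + 4 * D) * ‖f e ν‖ ≤ B) →
          ∀ (e : E) (ν : EuclideanSpace ℂ (Fin (dim e))),
            (1 + d e + ‖ν‖) ^ N * ‖f e ν‖ ≤
              c * B * Real.exp ((r + ε) * reNorm ν) := by
  set M := 4 * N + 4 * D with hMdef
  have hNM : N ≤ M := by omega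
  refine ⟨4 ^ M, by positivity, ?_⟩
  intro f hf hexp B hB e ν
  have hd0 := hd e
  have hnn : (0:ℝ) ≤ ‖ν‖ := norm_nonneg _
  have hB0 : 0 ≤ B := by
    refine le_trans ?_ (hB e 0 (fun j => by simp))
    positivity
  have hbase : (1:ℝ) ≤ 1 + d e + ‖ν‖ := by linarith
  have hpowN : (1 + d e + ‖ν‖) ^ N ≤ (1 + d e + ‖ν‖) ^ M :=
    pow_le_pow_right₀ hbase hNM
  have hAnn : 0 ≤ reNorm ν := Real.sqrt_nonneg _
  have h4M : (1:ℝ) ≤ 4 ^ M := one_le_pow₀ (by norm_num)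
  have hexpA : (1:ℝ) ≤ Real.exp ((r + ε) * reNorm ν) :=
    Real.one_le_exp (by positivity)
  have habsnn : 0 ≤ ‖f e ν‖ := norm_nonneg _
  rcases eq_or_lt_of_le hAnn with hA0 | hApos
  · -- imaginary case
    have hsum : ∑ j, (ν j).re ^ 2 = 0 := by
      have h1 : Real.sqrt (∑ j, (ν j).re ^ 2) = 0 := hA0.symm
      have h2 : (0:ℝ) ≤ ∑ j, (ν j).re ^ 2 := by positivity
      nlinarith [Real.sq_sqrt h2]
    have hre0 : ∀ j, (ν j).re = 0 := by
      intro j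
      have := (Finset.sum_eq_zero_iff_of_nonneg
        (fun i _ => sq_nonneg ((ν i).re))).mp hsum j (Finset.mem_univ j)
      exact pow_eq_zero_iff two_ne_zero |>.mp this
    calc (1 + d e + ‖ν‖) ^ N * ‖f e ν‖
        ≤ (1 + d e + ‖ν‖) ^ M * ‖f e ν‖ :=
          mul_le_mul_of_nonneg_right hpowN habsnn
      _ ≤ B := hB e ν hre0
      _ ≤ 4 ^ M * B * Real.exp ((r + ε) * reNorm ν) := by
          have h1 : B * 1 ≤ B * Real.exp ((r + ε) * reNorm ν) :=
            mul_le_mul_of_nonneg_left hexpA hB0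
          have h2 : B * Real.exp ((r + ε) * reNorm ν)
              ≤ 4 ^ M * (B * Real.exp ((r + ε) * reNorm ν)) :=
            le_mul_of_one_le_left (by positivity) h4M
          calc B = B * 1 := (mul_one B).symm
            _ ≤ B * Real.exp ((r + ε) * reNorm ν) := h1
            _ ≤ 4 ^ M * (B * Real.exp ((r + ε) * reNorm ν)) := h2
            _ = 4 ^ M * B * Real.exp ((r + ε) * reNorm ν) := by ring
  · -- main case
    set A := reNorm ν with hAdef
    have hA2 : ∑ j, (ν j).re ^ 2 = A ^ 2 := by
      rw [hAdef, reNorm, Real.sq_sqrt (by positivity)]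
    set a : Fin (dim e) → ℝ := fun j => (ν j).re / A with hadef
    have ha2 : ∑ j, a j ^ 2 = 1 := by
      simp only [hadef, div_pow]
      rw [← Finset.sum_div, hA2]
      field_simp
    set s := ∑ j, a j * (ν j).im with hs
    set T := Real.sqrt (∑ j, ((ν j).im - s * a j) ^ 2) with hT
    have hT0 : 0 ≤ T := Real.sqrt_nonneg _
    have hTsq : T ^ 2 = (∑ j, (ν j).im ^ 2) - s ^ 2 := by
      rw [hT, Real.sq_sqrt (by positivity)]
      have hexpand : ∀ j ∈ Finset.univ, ((ν j).im - s * a j) ^ 2 =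
          (ν j).im ^ 2 - (2 * s) * (a j * (ν j).im) + s ^ 2 * a j ^ 2 :=
        fun j _ => by ring
      rw [Finset.sum_congr rfl hexpand]
      rw [Finset.sum_add_distrib, Finset.sum_sub_distrib, ← Finset.mul_sum,
        ← Finset.mul_sum, ha2, ← hs]
      ring
    have hb2 : ∑ j, (ν j).im ^ 2 = s ^ 2 + T ^ 2 := by rw [hTsq]; ring
    set μ := 1 + d e + T with hμ
    have hμ1 : (1:ℝ) ≤ μ := by rw [hμ]; linarith
    have hμ0 : (0:ℝ) ≤ μ := by linarith
    have hnormsq : ∀ (x : EuclideanSpace ℂ (Fin (dim e))),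
        ‖x‖ = Real.sqrt (∑ j, ((x j).re ^ 2 + (x j).im ^ 2)) := by
      intro x
      rw [EuclideanSpace.norm_eq]
      congr 1
      refine Finset.sum_congr rfl fun j _ => ?_
      rw [Complex.sq_norm, Complex.normSq_apply]
      ring
    have hnu : ‖ν‖ = Real.sqrt (A ^ 2 + (s ^ 2 + T ^ 2)) := by
      rw [hnormsq]
      congr 1
      rw [Finset.sum_add_distrib, hA2, hb2]
    have hnu_le : ‖ν‖ ≤ A + |s| + T := by
      rw [hnu]
      have h1 : A ^ 2 + (s ^ 2 + T ^ 2) ≤ (A + |s| + T) ^ 2 := by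
        nlinarith [abs_nonneg s, sq_abs s, hApos.le, hT0,
          mul_nonneg hApos.le (abs_nonneg s), mul_nonneg hApos.le hT0,
          mul_nonneg (abs_nonneg s) hT0]
      calc Real.sqrt _ ≤ Real.sqrt ((A + |s| + T) ^ 2) := Real.sqrt_le_sqrt h1
        _ = A + |s| + T := Real.sqrt_sq (by positivity)
    -- the slice
    set u : EuclideanSpace ℂ (Fin (dim e)) := WithLp.toLp 2 (fun j => (a j : ℂ)) with hu
    set v : EuclideanSpace ℂ (Fin (dim e)) := WithLp.toLp 2 (fun j => ((ν j).im : ℂ) * Complex.I) with hv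
    set γ : ℂ → EuclideanSpace ℂ (Fin (dim e)) := fun w => w • u + v with hγ
    have hγ_apply : ∀ (w : ℂ) j, γ w j = w * (a j : ℂ) + ((ν j).im : ℂ) * Complex.I :=
      fun w j => rfl
    have hγre : ∀ (w : ℂ) j, (γ w j).re = w.re * a j := by
      intro w j
      rw [hγ_apply]
      simp [Complex.add_re, Complex.mul_re]
    have hγim : ∀ (w : ℂ) j, (γ w j).im = w.im * a j + (ν j).im := by
      intro w j
      rw [hγ_apply]
      simp [Complex.add_im, Complex.mul_im]
    have hγdiff : Differentiable ℂ γ := (differentiable_id.smul_const u).add_const v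
    have hγ_renorm : ∀ w : ℂ, reNorm (γ w) = |w.re| := by
      intro w
      rw [reNorm]
      have : ∀ j ∈ Finset.univ, (γ w j).re ^ 2 = w.re ^ 2 * a j ^ 2 := by
        intro j _; rw [hγre]; ring
      rw [Finset.sum_congr rfl this, ← Finset.mul_sum, ha2, mul_one,
        Real.sqrt_sq_eq_abs]
    have hγA : γ (A : ℂ) = ν := by
      ext j
      apply Complex.ext
      · rw [hγre]
        simp only [Complex.ofReal_re, hadef]
        field_simp
      · rw [hγim]
        simp [Complex.ofReal_im]
    have hγt_re0 : ∀ (t : ℝ) j, (γ ((t : ℂ) * Complex.I) j).re = 0 := by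
      intro t j
      rw [hγre]
      simp
    have hγt_norm : ∀ t : ℝ, ‖γ ((t : ℂ) * Complex.I)‖ = Real.sqrt ((t + s) ^ 2 + T ^ 2) := by
      intro t
      rw [hnormsq]
      congr 1
      have h1 : ∀ j ∈ Finset.univ, (γ ((t:ℂ) * Complex.I) j).re ^ 2
          + (γ ((t:ℂ) * Complex.I) j).im ^ 2
          = t ^ 2 * a j ^ 2 + (2 * t) * (a j * (ν j).im) + (ν j).im ^ 2 := by
        intro j _
        rw [hγt_re0, hγim]
        simp only [Complex.mul_im, Complex.ofReal_re, Complex.I_im, Complex.ofReal_im,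
          Complex.I_re, mul_one, mul_zero, zero_mul, add_zero]
        ring
      rw [Finset.sum_congr rfl h1, Finset.sum_add_distrib, Finset.sum_add_distrib,
        ← Finset.mul_sum, ← Finset.mul_sum, ha2, ← hs, hb2]
      ring
    -- the auxiliary function
    set G : ℂ → ℂ := fun w => f e (γ w) * ((μ : ℂ) + w + (s : ℂ) * Complex.I) ^ M
      * Complex.exp (-((r + ε : ℝ) : ℂ) * w) with hG
    have hGdiff : Differentiable ℂ G := by
      apply Differentiable.mul
      · apply Differentiable.mul
        · exact (hf e).comp hγdiff
        · exact (((differentiable_const _).add differentiable_id).add_const _).pow M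
      · exact (differentiable_id.const_mul _).cexp
    obtain ⟨C₀, hC₀⟩ := hexp e 0
    set C₁ := max C₀ 0 with hC₁
    have hC₁0 : 0 ≤ C₁ := le_max_right _ _
    set K := μ + |s| with hK
    have hK0 : 0 ≤ K := by positivity
    have habs_w : ∀ w : ℂ, ‖(μ : ℂ) + w + (s : ℂ) * Complex.I‖
        ≤ K + ‖w‖ := by
      intro w
      calc ‖(μ : ℂ) + w + (s : ℂ) * Complex.I‖
          ≤ ‖(μ : ℂ) + w‖ + ‖(s : ℂ) * Complex.I‖ :=
            norm_add_le _ _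
        _ ≤ ‖(μ : ℂ)‖ + ‖w‖ + ‖(s : ℂ) * Complex.I‖ := by
            have := norm_add_le ((μ : ℂ)) w
            linarith
        _ = K + ‖w‖ := by
            rw [hK]
            simp [Complex.norm_real, abs_of_nonneg hμ0]
            ring
    have hgrow : ∀ w : ℂ, 0 ≤ w.re →
        ‖G w‖ ≤ C₁ * (K + ‖w‖) ^ M * Real.exp (-(ε * w.re)) := by
      intro w hw
      have h1 : ‖f e (γ w)‖ ≤ C₁ * Real.exp (r * w.re) := by
        have h2 := hC₀ (γ w)
        rw [pow_zero, one_mul, hγ_renorm, abs_of_nonneg hw] at h2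
        exact h2.trans (mul_le_mul_of_nonneg_right (le_max_left C₀ 0) (Real.exp_pos _).le)
      have h3 : ‖Complex.exp (-((r + ε : ℝ) : ℂ) * w)‖
          = Real.exp (-((r + ε) * w.re)) := by
        rw [Complex.norm_exp]
        have : (-((r + ε : ℝ) : ℂ) * w).re = -((r + ε) * w.re) := by
          simp [Complex.mul_re]
          ring
        rw [this]
      have h4 : ‖G w‖ = ‖f e (γ w)‖
          * ‖(μ : ℂ) + w + (s : ℂ) * Complex.I‖ ^ M
          * Real.exp (-((r + ε) * w.re)) := by
        rw [hG]
        simp only [norm_mul, norm_pow, h3]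
      rw [h4]
      have hpow : ‖(μ : ℂ) + w + (s : ℂ) * Complex.I‖ ^ M
          ≤ (K + ‖w‖) ^ M :=
        pow_le_pow_left₀ (norm_nonneg _) (habs_w w) M
      have h5 := mul_le_mul_of_nonneg_right
        (mul_le_mul h1 hpow (pow_nonneg (norm_nonneg _) M)
          (mul_nonneg hC₁0 (Real.exp_pos _).le))
        (Real.exp_pos (-((r + ε) * w.re))).le
      refine h5.trans (le_of_eq ?_)
      have hE : Real.exp (r * w.re) * Real.exp (-((r + ε) * w.re))
          = Real.exp (-(ε * w.re)) := by
        rw [← Real.exp_add]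
        congr 1
        ring
      calc C₁ * Real.exp (r * w.re) * (K + ‖w‖) ^ M * Real.exp (-((r + ε) * w.re))
          = C₁ * (K + ‖w‖) ^ M
            * (Real.exp (r * w.re) * Real.exp (-((r + ε) * w.re))) := by ring
        _ = C₁ * (K + ‖w‖) ^ M * Real.exp (-(ε * w.re)) := by rw [hE]
    have hbd : ∀ t : ℝ, ‖G ((t : ℂ) * Complex.I)‖ ≤ 2 ^ M * B := by
      intro t
      have hb := hB e (γ ((t:ℂ) * Complex.I)) (hγt_re0 t)
      have hsq : 0 ≤ (t + s)^2 + T^2 := by positivity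
      have hTle : T ≤ Real.sqrt ((t + s) ^ 2 + T ^ 2) :=
        Real.le_sqrt_of_sq_le (by nlinarith)
      have htsle : |t + s| ≤ Real.sqrt ((t + s) ^ 2 + T ^ 2) :=
        Real.le_sqrt_of_sq_le (by rw [sq_abs]; nlinarith)
      have habs : ‖(μ : ℂ) + (t : ℂ) * Complex.I + (s : ℂ) * Complex.I‖
          ≤ 2 * (1 + d e + ‖γ ((t:ℂ) * Complex.I)‖) := by
        have e1 : (μ : ℂ) + (t : ℂ) * Complex.I + (s : ℂ) * Complex.I
            = (μ : ℂ) + ((t + s : ℝ) : ℂ) * Complex.I := by push_cast; ring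
        rw [e1]
        have h2 := Complex.norm_le_abs_re_add_abs_im ((μ : ℂ) + ((t + s : ℝ) : ℂ) * Complex.I)
        have hre : ((μ : ℂ) + ((t + s : ℝ) : ℂ) * Complex.I).re = μ := by
          simp [Complex.add_re, Complex.mul_re]
        have him : ((μ : ℂ) + ((t + s : ℝ) : ℂ) * Complex.I).im = t + s := by
          simp [Complex.add_im, Complex.mul_im]
        rw [hre, him, abs_of_nonneg hμ0] at h2
        rw [hγt_norm]
        rw [hμ] at h2 ⊢
        linarith
      have hexp1 : ‖Complex.exp (-((r + ε : ℝ) : ℂ) * ((t:ℂ) * Complex.I))‖ = 1 := by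
        rw [Complex.norm_exp]
        have : (-((r + ε : ℝ) : ℂ) * ((t:ℂ) * Complex.I)).re = 0 := by
          simp [Complex.mul_re, Complex.mul_im]
        rw [this, Real.exp_zero]
      have h4 : ‖G ((t:ℂ) * Complex.I)‖ = ‖f e (γ ((t:ℂ) * Complex.I))‖
          * ‖(μ : ℂ) + (t:ℂ) * Complex.I + (s : ℂ) * Complex.I‖ ^ M := by
        rw [hG]
        simp only [norm_mul, norm_pow, hexp1, mul_one]
      rw [h4]
      have hγnn : (0:ℝ) ≤ 1 + d e + ‖γ ((t:ℂ) * Complex.I)‖ := by positivity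
      calc ‖f e (γ ((t:ℂ) * Complex.I))‖
            * ‖(μ : ℂ) + (t:ℂ) * Complex.I + (s : ℂ) * Complex.I‖ ^ M
          ≤ ‖f e (γ ((t:ℂ) * Complex.I))‖
            * (2 * (1 + d e + ‖γ ((t:ℂ) * Complex.I)‖)) ^ M :=
            mul_le_mul_of_nonneg_left
              (pow_le_pow_left₀ (norm_nonneg _) habs M)
              (norm_nonneg _)
        _ = 2 ^ M * ((1 + d e + ‖γ ((t:ℂ) * Complex.I)‖) ^ M
            * ‖f e (γ ((t:ℂ) * Complex.I))‖) := by
            rw [mul_pow]; ring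
        _ ≤ 2 ^ M * B := by
            have h2M : (0:ℝ) ≤ 2 ^ M := by positivity
            exact mul_le_mul_of_nonneg_left hb h2M
    -- apply Phragmén–Lindelöf
    have key := pl_helper hGdiff hC₁0 hK0 hε M hgrow hbd (A : ℂ) (by simp [hApos.le])
    -- evaluate at A
    have hGA : ‖G (A : ℂ)‖ = ‖f e ν‖
        * ‖(μ : ℂ) + (A : ℂ) + (s : ℂ) * Complex.I‖ ^ M
        * Real.exp (-((r + ε) * A)) := by
      rw [hG]
      simp only [norm_mul, norm_pow, hγA]
      congr 1
      rw [Complex.norm_exp]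
      have : (-((r + ε : ℝ) : ℂ) * (A : ℂ)).re = -((r + ε) * A) := by
        simp [Complex.mul_re]
        ring
      rw [this]
    have hlow : 1 + d e + ‖ν‖ ≤ 2 * ‖(μ : ℂ) + (A : ℂ) + (s : ℂ) * Complex.I‖ := by
      set z := (μ : ℂ) + (A : ℂ) + (s : ℂ) * Complex.I with hz
      have hre : z.re = μ + A := by simp [hz, Complex.add_re, Complex.mul_re]
      have him : z.im = s := by simp [hz, Complex.add_im, Complex.mul_im]
      have h1 := Complex.abs_re_le_norm z
      have h2 := Complex.abs_im_le_norm z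
      rw [hre] at h1
      rw [him] at h2
      have h3 : μ + A ≤ ‖z‖ := le_trans (le_abs_self _) h1
      rw [hμ] at h3
      linarith [hnu_le]
    have hznn : (0:ℝ) ≤ ‖(μ : ℂ) + (A : ℂ) + (s : ℂ) * Complex.I‖ :=
      norm_nonneg _
    have hfinal : (1 + d e + ‖ν‖) ^ M * ‖f e ν‖
        ≤ 4 ^ M * B * Real.exp ((r + ε) * A) := by
      have hstep : (1 + d e + ‖ν‖) ^ M
          ≤ 2 ^ M * ‖(μ : ℂ) + (A : ℂ) + (s : ℂ) * Complex.I‖ ^ M := by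
        rw [← mul_pow]
        exact pow_le_pow_left₀ (by linarith) hlow M
      have hG_le : ‖f e ν‖
          * ‖(μ : ℂ) + (A : ℂ) + (s : ℂ) * Complex.I‖ ^ M
          ≤ 2 ^ M * B * Real.exp ((r + ε) * A) := by
        have h5 : ‖f e ν‖
            * ‖(μ : ℂ) + (A : ℂ) + (s : ℂ) * Complex.I‖ ^ M
            * Real.exp (-((r + ε) * A)) ≤ 2 ^ M * B := by
          rw [← hGA]; exact key
        have h6 := mul_le_mul_of_nonneg_right h5 (Real.exp_pos ((r + ε) * A)).le
        rw [mul_assoc, ← Real.exp_add, neg_add_cancel, Real.exp_zero, mul_one] at h6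
        exact h6
      calc (1 + d e + ‖ν‖) ^ M * ‖f e ν‖
          ≤ (2 ^ M * ‖(μ : ℂ) + (A : ℂ) + (s : ℂ) * Complex.I‖ ^ M)
            * ‖f e ν‖ := mul_le_mul_of_nonneg_right hstep habsnn
        _ = 2 ^ M * (‖f e ν‖
            * ‖(μ : ℂ) + (A : ℂ) + (s : ℂ) * Complex.I‖ ^ M) := by ring
        _ ≤ 2 ^ M * (2 ^ M * B * Real.exp ((r + ε) * A)) := by
            have h2M : (0:ℝ) ≤ 2 ^ M := by positivity
            exact mul_le_mul_of_nonneg_left hG_le h2M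
        _ = 4 ^ M * B * Real.exp ((r + ε) * A) := by
            rw [show (4:ℝ) = 2 * 2 by norm_num, mul_pow]
            ring
    calc (1 + d e + ‖ν‖) ^ N * ‖f e ν‖
        ≤ (1 + d e + ‖ν‖) ^ M * ‖f e ν‖ :=
          mul_le_mul_of_nonneg_right hpowN habsnn
      _ ≤ 4 ^ M * B * Real.exp ((r + ε) * A) := hfinal
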